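/- Let n ≥ 1, let 0 ≤ i ≤ n, and let a_0, a_1, …, a_{i-1} be positive integers with v_2(a_j) = j for every 0 ≤ j ≤ i-1, where v_2 denotes the 2-adic valuation. If N is a positive integer with N > 2^n - 2^i + (a_0 + a_1 + … + a_{i-1}), then the n-element set A = {a_0, a_1, …, a_{i-1}} ∪ {2^i, 2^{i+1}, …, 2^{n-1}} is sumset-distinct modulo N. -/

import Mathlib

/-- An `n`-element set `A` of positive integers is *sumset-distinct modulo `N`*
if all subset sums (including the empty sum) are pairwise distinct modulo `N`. -/
def SumsetDistinctMod (N : ℕ) (A : Finset ℕ) : Prop :=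
  ∀ B ⊆ A, ∀ C ⊆ A, (∑ x ∈ B, x) % N = (∑ x ∈ C, x) % N → B = C

open Finset in

lemma aux_ne (b : ℕ → ℕ) (B C : Finset ℕ)
    (hB : ∀ k ∈ B, 0 < b k ∧ padicValNat 2 (b k) = k)
    (hC : ∀ k ∈ C, 0 < b k ∧ padicValNat 2 (b k) = k)
    (j : ℕ) (hjB : j ∈ B) (hjC : j ∉ C)
    (hmin : ∀ k ∈ B ∪ C, j ≤ k) :
    (∑ x ∈ B, b x) ≠ ∑ x ∈ C, b x := by
  intro h
  have hdC : (2:ℕ) ^ (j+1) ∣ ∑ x ∈ C, b x := by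
    refine Finset.dvd_sum fun k hk => ?_
    have hk' : j < k := lt_of_le_of_ne (hmin k (mem_union_right _ hk)) (by rintro rfl; exact hjC hk)
    refine (pow_dvd_pow 2 hk').trans ?_
    calc (2:ℕ)^k = 2 ^ padicValNat 2 (b k) := by rw [(hC k hk).2]
    _ ∣ b k := pow_padicValNat_dvd
  have hrest : (2:ℕ) ^ (j+1) ∣ ∑ x ∈ B.erase j, b x := by
    refine Finset.dvd_sum fun k hk => ?_
    have hk1 := Finset.mem_erase.mp hk
    have hk' : j < k := lt_of_le_of_ne (hmin k (mem_union_left _ hk1.2)) (Ne.symm hk1.1)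
    refine (pow_dvd_pow 2 hk').trans ?_
    calc (2:ℕ)^k = 2 ^ padicValNat 2 (b k) := by rw [(hB k hk1.2).2]
    _ ∣ b k := pow_padicValNat_dvd
  have hsum : b j + ∑ x ∈ B.erase j, b x = ∑ x ∈ B, b x := Finset.add_sum_erase B b hjB
  have hdvdbj : (2:ℕ) ^ (j+1) ∣ b j := by
    have h2 : (2:ℕ) ^ (j+1) ∣ (∑ x ∈ B.erase j, b x) + b j := by
      rw [Nat.add_comm (∑ x ∈ B.erase j, b x) (b j), hsum, h]; exact hdC
    exact (Nat.dvd_add_right hrest).mp h2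
  have hbj := hB j hjB
  have hnd : ¬ (2:ℕ) ^ (padicValNat 2 (b j) + 1) ∣ b j :=
    pow_succ_padicValNat_not_dvd hbj.1.ne'
  rw [hbj.2] at hnd
  exact hnd hdvdbj

lemma key (b : ℕ → ℕ) (S : Finset ℕ)
    (hb : ∀ j ∈ S, 0 < b j ∧ padicValNat 2 (b j) = j) :
    ∀ B ⊆ S, ∀ C ⊆ S, (∑ x ∈ B, b x) = (∑ x ∈ C, b x) → B = C := by
  intro B hBS C hCS h
  by_contra hne
  have hU : (B \ C ∪ C \ B).Nonempty := by
    rw [Finset.nonempty_iff_ne_empty]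
    intro he
    have h1 := Finset.union_eq_empty.mp he
    exact hne (Finset.Subset.antisymm (Finset.sdiff_eq_empty_iff_subset.mp h1.1)
      (Finset.sdiff_eq_empty_iff_subset.mp h1.2))
  set j := (B \ C ∪ C \ B).min' hU with hj
  have hjmem := Finset.min'_mem _ hU
  have hmin : ∀ k ∈ B \ C ∪ C \ B, j ≤ k := fun k hk => Finset.min'_le _ k hk
  have hs : (∑ x ∈ B \ C, b x) = ∑ x ∈ C \ B, b x := by
    have h1 := Finset.sum_inter_add_sum_sdiff B C b
    have h2 := Finset.sum_inter_add_sum_sdiff C B b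
    rw [Finset.inter_comm] at h2
    omega
  have hB' : ∀ k ∈ B \ C, 0 < b k ∧ padicValNat 2 (b k) = k :=
    fun k hk => hb k (hBS (Finset.mem_sdiff.mp hk).1)
  have hC' : ∀ k ∈ C \ B, 0 < b k ∧ padicValNat 2 (b k) = k :=
    fun k hk => hb k (hCS (Finset.mem_sdiff.mp hk).1)
  rcases Finset.mem_union.mp hjmem with hjB | hjC
  · exact aux_ne b (B \ C) (C \ B) hB' hC' j hjB
      (fun hc => (Finset.mem_sdiff.mp hc).2 (Finset.mem_sdiff.mp hjB).1) hmin hs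
  · refine aux_ne b (C \ B) (B \ C) hC' hB' j hjC
      (fun hc => (Finset.mem_sdiff.mp hc).2 (Finset.mem_sdiff.mp hjC).1) ?_ hs.symm
    intro k hk
    exact hmin k (by rw [Finset.union_comm]; exact hk)

lemma sum_pow_Ico (i n : ℕ) (h : i ≤ n) : (∑ j ∈ Finset.Ico i n, 2 ^ j) = 2 ^ n - 2 ^ i := by
  induction n, h using Nat.le_induction with
  | base => simp
  | succ n hn ih =>
    rw [Finset.sum_Ico_succ_top hn, ih, pow_succ]
    have h1 : (2:ℕ)^i ≤ 2^n := Nat.pow_le_pow_right (by norm_num) hn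
    omega

theorem stmt19 (n : ℕ) (hn : 1 ≤ n) (i : ℕ) (hi : i ≤ n) (a : ℕ → ℕ)
    (ha : ∀ j < i, 0 < a j ∧ padicValNat 2 (a j) = j)
    (N : ℕ) (hN : 2 ^ n - 2 ^ i + ∑ j ∈ Finset.range i, a j < N) :
    (((Finset.range i).image a) ∪ ((Finset.Ico i n).image (fun j => 2 ^ j))).card = n ∧
      SumsetDistinctMod N
        (((Finset.range i).image a) ∪ ((Finset.Ico i n).image (fun j => 2 ^ j))) := by
  set b : ℕ → ℕ := fun j => if j < i then a j else 2 ^ j with hbdef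
  have hb : ∀ j ∈ Finset.range n, 0 < b j ∧ padicValNat 2 (b j) = j := by
    intro j hj
    by_cases hji : j < i
    · simpa [hbdef, hji] using ha j hji
    · constructor
      · simp only [hbdef, if_neg hji]; positivity
      · simp only [hbdef, if_neg hji]; exact padicValNat.prime_pow j
  have hinj : Set.InjOn b (Finset.range n) := by
    intro x hx y hy hxy
    have h1 := (hb x hx).2
    have h2 := (hb y hy).2
    rw [← h1, ← h2, hxy]
  have hA : ((Finset.range i).image a) ∪ ((Finset.Ico i n).image (fun j => 2 ^ j))
      = (Finset.range n).image b := by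
    have hr : Finset.range n = Finset.range i ∪ Finset.Ico i n := by
      rw [Finset.range_eq_Ico, Finset.range_eq_Ico]
      exact (Finset.Ico_union_Ico_eq_Ico (Nat.zero_le i) hi).symm
    rw [hr, Finset.image_union]
    congr 1
    · exact (Finset.image_congr fun x hx => by
        simp only [hbdef]; rw [if_pos (Finset.mem_range.mp hx)]).symm
    · exact (Finset.image_congr fun x hx => by
        simp only [hbdef]; rw [if_neg (not_lt.mpr (Finset.mem_Ico.mp hx).1)]).symm
  rw [hA]
  have hcard : ((Finset.range n).image b).card = n := by
    rw [Finset.card_image_of_injOn hinj, Finset.card_range]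
  refine ⟨hcard, ?_⟩
  -- total sum
  have htot : (∑ x ∈ (Finset.range n).image b, x) = 2 ^ n - 2 ^ i + ∑ j ∈ Finset.range i, a j := by
    rw [Finset.sum_image (fun x hx y hy => hinj hx hy)]
    have hr : Finset.range n = Finset.range i ∪ Finset.Ico i n := by
      rw [Finset.range_eq_Ico, Finset.range_eq_Ico]
      exact (Finset.Ico_union_Ico_eq_Ico (Nat.zero_le i) hi).symm
    have hdisj : Disjoint (Finset.range i) (Finset.Ico i n) := by
      rw [Finset.range_eq_Ico]
      exact Finset.Ico_disjoint_Ico_consecutive 0 i n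
    rw [hr, Finset.sum_union hdisj]
    have e1 : (∑ j ∈ Finset.range i, b j) = ∑ j ∈ Finset.range i, a j :=
      Finset.sum_congr rfl fun x hx => by
        simp only [hbdef]; rw [if_pos (Finset.mem_range.mp hx)]
    have e2 : (∑ j ∈ Finset.Ico i n, b j) = 2 ^ n - 2 ^ i := by
      rw [← sum_pow_Ico i n hi]
      exact Finset.sum_congr rfl fun x hx => by
        simp only [hbdef]; rw [if_neg (not_lt.mpr (Finset.mem_Ico.mp hx).1)]
    rw [e1, e2]; ring
  intro B hB C hC hmod
  -- represent B and C as images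
  have hrep : ∀ D : Finset ℕ, D ⊆ (Finset.range n).image b →
      D = ((Finset.range n).filter (fun j => b j ∈ D)).image b := by
    intro D hD
    ext x
    simp only [Finset.mem_image, Finset.mem_filter]
    constructor
    · intro hx
      obtain ⟨j, hj, rfl⟩ := Finset.mem_image.mp (hD hx)
      exact ⟨j, ⟨hj, hx⟩, rfl⟩
    · rintro ⟨j, ⟨_, hj⟩, rfl⟩; exact hj
  have hsumD : ∀ D : Finset ℕ, D ⊆ (Finset.range n).image b →
      (∑ x ∈ D, x) = ∑ j ∈ (Finset.range n).filter (fun j => b j ∈ D), b j := by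
    intro D hD
    conv_lhs => rw [hrep D hD]
    exact Finset.sum_image fun x hx y hy =>
      hinj (Finset.mem_filter.mp hx).1 (Finset.mem_filter.mp hy).1
  have hle : ∀ D : Finset ℕ, D ⊆ (Finset.range n).image b → (∑ x ∈ D, x) < N := by
    intro D hD
    calc (∑ x ∈ D, x) ≤ ∑ x ∈ (Finset.range n).image b, x :=
          Finset.sum_le_sum_of_subset hD
    _ = _ := htot
    _ < N := hN
  have hsums : (∑ x ∈ B, x) = ∑ x ∈ C, x := by
    rw [Nat.mod_eq_of_lt (hle B hB), Nat.mod_eq_of_lt (hle C hC)] at hmod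
    exact hmod
  rw [hsumD B hB, hsumD C hC] at hsums
  have := key b (Finset.range n) hb _ (Finset.filter_subset _ _) _ (Finset.filter_subset _ _) hsums
  rw [hrep B hB, hrep C hC, this]
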